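/- The partial Cayley transform Φ_* is a biholomorphic map from 𝐃_{n,m} onto 𝐇_{n,m}: for every (W,η) ∈ 𝐃_{n,m} the matrix I_n − W is invertible and Φ_*(W,η) ∈ 𝐇_{n,m}; Φ_* is holomorphic, bijective onto 𝐇_{n,m}, and its inverse is holomorphic. -/

import Mathlib

noncomputable section
open Matrix Complex

abbrev Mat (a b : ℕ) (R : Type) := Matrix (Fin a) (Fin b) R

def Jn (n : ℕ) : Matrix (Fin n ⊕ Fin n) (Fin n ⊕ Fin n) ℝ :=
  Matrix.fromBlocks 0 1 (-1) 0

def Sp (n : ℕ) : Set (Matrix (Fin n ⊕ Fin n) (Fin n ⊕ Fin n) ℝ) :=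
  {M | Mᵀ * Jn n * M = Jn n}

def blkA {n : ℕ} (M : Matrix (Fin n ⊕ Fin n) (Fin n ⊕ Fin n) ℝ) : Mat n n ℂ :=
  (Matrix.toBlocks₁₁ M).map (Complex.ofReal)
def blkB {n : ℕ} (M : Matrix (Fin n ⊕ Fin n) (Fin n ⊕ Fin n) ℝ) : Mat n n ℂ :=
  (Matrix.toBlocks₁₂ M).map (Complex.ofReal)
def blkC {n : ℕ} (M : Matrix (Fin n ⊕ Fin n) (Fin n ⊕ Fin n) ℝ) : Mat n n ℂ :=
  (Matrix.toBlocks₂₁ M).map (Complex.ofReal)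
def blkD {n : ℕ} (M : Matrix (Fin n ⊕ Fin n) (Fin n ⊕ Fin n) ℝ) : Mat n n ℂ :=
  (Matrix.toBlocks₂₂ M).map (Complex.ofReal)

def SiegelH (n : ℕ) : Set (Mat n n ℂ) :=
  {Ω | Ω.IsSymm ∧ (Ω.map Complex.im).PosDef}

def spAct {n : ℕ} (M : Matrix (Fin n ⊕ Fin n) (Fin n ⊕ Fin n) ℝ) (Ω : Mat n n ℂ) : Mat n n ℂ :=
  (blkA M * Ω + blkB M) * (blkC M * Ω + blkD M)⁻¹

/-- An element of the Jacobi group G^J = Sp(n,ℝ) ⋉ H_ℝ^(n,m):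
a symplectic part together with (λ, μ, κ). -/
abbrev GJ (n m : ℕ) :=
  Matrix (Fin n ⊕ Fin n) (Fin n ⊕ Fin n) ℝ × Mat m n ℝ × Mat m n ℝ × Mat m m ℝ

/-- The Siegel-Jacobi space 𝐇_{n,m} = 𝐇ₙ × ℂ^(m,n). -/
def HJ (n m : ℕ) : Set (Mat n n ℂ × Mat m n ℂ) := {p | p.1 ∈ SiegelH n}

/-- The action of G^J on 𝐇_{n,m}:
(M,(λ,μ,κ))·(Ω,Z) = (M∘Ω, (Z+λΩ+μ)(CΩ+D)⁻¹). -/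
def jAct {n m : ℕ} (g : GJ n m) (p : Mat n n ℂ × Mat m n ℂ) :
    Mat n n ℂ × Mat m n ℂ :=
  (spAct g.1 p.1,
    (p.2 + g.2.1.map Complex.ofReal * p.1 + g.2.2.1.map Complex.ofReal) *
      (blkC g.1 * p.1 + blkD g.1)⁻¹)
open scoped ComplexOrder

/-- Entrywise complex conjugate of a matrix. -/
def conjM {a b : ℕ} (W : Mat a b ℂ) : Mat a b ℂ := W.map (starRingEnd ℂ)

/-- The generalized unit disk 𝐃ₙ: symmetric W with Iₙ − WW̄ positive definite. -/
def SiegelD (n : ℕ) : Set (Mat n n ℂ) :=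
  {W | W.IsSymm ∧ (1 - W * conjM W).PosDef}

/-- The Siegel-Jacobi disk 𝐃_{n,m} = 𝐃ₙ × ℂ^(m,n). -/
def DJ (n m : ℕ) : Set (Mat n n ℂ × Mat m n ℂ) := {p | p.1 ∈ SiegelD n}

/-- The partial Cayley transform
Φ_*(W,η) = (i(Iₙ+W)(Iₙ−W)⁻¹, 2iη(Iₙ−W)⁻¹). -/
def cayley {n m : ℕ} (p : Mat n n ℂ × Mat m n ℂ) : Mat n n ℂ × Mat m n ℂ :=
  (Complex.I • ((1 + p.1) * (1 - p.1)⁻¹), (2 * Complex.I) • (p.2 * (1 - p.1)⁻¹))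

/- STATEMENT 14: The partial Cayley transform Φ_* is a biholomorphic map of
the Siegel-Jacobi disk 𝐃_{n,m} onto the Siegel-Jacobi space 𝐇_{n,m}. -/

attribute [local instance] Matrix.normedAddCommGroup Matrix.normedSpace

section CayleyHelpers
variable {k : ℕ}


-- L0
lemma dot_conjT (A : Matrix (Fin k) (Fin k) ℂ) (v u : Fin k → ℂ) :
    star v ⬝ᵥ (Aᴴ *ᵥ u) = star (A *ᵥ v) ⬝ᵥ u := by
  rw [star_mulVec, dotProduct_mulVec]

-- isUnit from trivial kernel
lemma isUnit_of_ker (A : Matrix (Fin k) (Fin k) ℂ)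
    (h : ∀ v : Fin k → ℂ, A *ᵥ v = 0 → v = 0) : IsUnit A := by
  rw [Matrix.isUnit_iff_isUnit_det, isUnit_iff_ne_zero]
  intro hdet
  obtain ⟨v, hv, hAv⟩ := (Matrix.exists_mulVec_eq_zero_iff).2 hdet
  exact hv (h v hAv)

-- congruence posdef
lemma posDef_conj {P B : Matrix (Fin k) (Fin k) ℂ} (hP : P.PosDef) (hB : IsUnit B) :
    (B * P * Bᴴ).PosDef := by
  have hBdet : IsUnit B.det := (Matrix.isUnit_iff_isUnit_det _).1 hB
  rw [Matrix.posDef_iff_dotProduct_mulVec]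
  refine ⟨?_, ?_⟩
  · have := Matrix.isHermitian_mul_mul_conjTranspose B hP.1
    simpa [Matrix.mul_assoc] using this
  · intro v hv
    have h1 : (B * P * Bᴴ) *ᵥ v = B *ᵥ (P *ᵥ (Bᴴ *ᵥ v)) := by
      simp [Matrix.mulVec_mulVec, Matrix.mul_assoc]
    have h2 : star v ⬝ᵥ ((B * P * Bᴴ) *ᵥ v) = star (Bᴴ *ᵥ v) ⬝ᵥ (P *ᵥ (Bᴴ *ᵥ v)) := by
      rw [h1, ← Matrix.conjTranspose_conjTranspose B, dot_conjT, Matrix.conjTranspose_conjTranspose]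
    rw [h2]
    refine hP.dotProduct_mulVec_pos fun h0 => hv ?_
    have hBH : IsUnit (Bᴴ).det := by
      rw [Matrix.det_conjTranspose]
      exact (IsUnit.star hBdet)
    have := congrArg (fun w => (Bᴴ)⁻¹ *ᵥ w) h0
    simpa [Matrix.mulVec_mulVec, Matrix.nonsing_inv_mul _ hBH] using this

lemma dot_map (S : Matrix (Fin k) (Fin k) ℝ) (x y : Fin k → ℝ) :
    (fun i => (x i : ℂ)) ⬝ᵥ ((S.map Complex.ofReal) *ᵥ fun i => (y i : ℂ))
      = ((x ⬝ᵥ (S *ᵥ y) : ℝ) : ℂ) := by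
  simp [dotProduct, Matrix.mulVec, Matrix.map_apply, Finset.mul_sum]

lemma posDef_map_ofReal {S : Matrix (Fin k) (Fin k) ℝ} :
    (S.map Complex.ofReal).PosDef ↔ S.PosDef := by
  have hct : ∀ T : Matrix (Fin k) (Fin k) ℝ, (T.map Complex.ofReal)ᴴ = Tᵀ.map Complex.ofReal := by
    intro T; ext i j; simp [Matrix.conjTranspose_apply, Matrix.map_apply]
  rw [Matrix.posDef_iff_dotProduct_mulVec, Matrix.posDef_iff_dotProduct_mulVec]
  constructor
  · rintro ⟨hherm, hq⟩
    constructor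
    · have := hherm
      rw [Matrix.IsHermitian, hct] at this
      ext i j
      have := congrFun (congrFun this i) j
      simpa [Matrix.map_apply, Matrix.conjTranspose_apply] using this
    · intro x hx
      have hx' : (fun i => (x i : ℂ)) ≠ 0 := by
        intro h0; apply hx; ext i
        have := congrFun h0 i
        simpa using this
      have := hq hx'
      rw [show star (fun i => (x i : ℂ)) = fun i => (x i : ℂ) by
        ext i; simp [Complex.conj_ofReal]] at this
      rw [dot_map] at this
      have := Complex.zero_lt_real.1 this
      simpa using this
  · rintro ⟨hherm, hq⟩
    constructor
    · rw [Matrix.IsHermitian, hct]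
      rw [Matrix.IsHermitian] at hherm
      rw [show Sᵀ = S from hherm]
    · intro v hv
      set x : Fin k → ℝ := fun i => (v i).re with hxdef
      set y : Fin k → ℝ := fun i => (v i).im with hydef
      have hvdec : v = (fun i => (x i : ℂ)) + Complex.I • fun i => (y i : ℂ) := by
        ext i; simp [hxdef, hydef, Complex.ext_iff]
      have hsv : star v = (fun i => (x i : ℂ)) - Complex.I • fun i => (y i : ℂ) := by
        ext i; simp [hxdef, hydef, Complex.ext_iff]
      have hsymm : ∀ a b : Fin k → ℝ, a ⬝ᵥ (S *ᵥ b) = b ⬝ᵥ (S *ᵥ a) := by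
        intro a b
        rw [Matrix.dotProduct_mulVec, ← Matrix.mulVec_transpose,
          show Sᵀ = S from hherm, dotProduct_comm]
      have hexp : star v ⬝ᵥ ((S.map Complex.ofReal) *ᵥ v)
          = ((x ⬝ᵥ (S *ᵥ x) + y ⬝ᵥ (S *ᵥ y) : ℝ) : ℂ) := by
        rw [hsv]; nth_rewrite 1 [hvdec]
        rw [Matrix.mulVec_add, Matrix.mulVec_smul]
        rw [sub_dotProduct, dotProduct_add, dotProduct_add,
          smul_dotProduct, smul_dotProduct, dotProduct_smul,
          dotProduct_smul]
        rw [dot_map, dot_map, dot_map, dot_map]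
        rw [hsymm y x]
        simp only [smul_eq_mul, ← mul_assoc, Complex.I_mul_I]
        push_cast
        ring
      rw [hexp]
      have hxy : x ≠ 0 ∨ y ≠ 0 := by
        by_contra h
        push_neg at h
        apply hv; ext i
        have h1 := congrFun h.1 i
        have h2 := congrFun h.2 i
        simp [hxdef, hydef] at h1 h2
        simp [Complex.ext_iff, h1, h2]
      have hps : S.PosSemidef := (Matrix.posDef_iff_dotProduct_mulVec.2 ⟨hherm, hq⟩).posSemidef
      have hpos : 0 < x ⬝ᵥ (S *ᵥ x) + y ⬝ᵥ (S *ᵥ y) := by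
        rcases hxy with hx | hy
        · have := hq hx
          have h2 := hps.dotProduct_mulVec_nonneg y
          simp only [star_trivial] at this h2 ⊢
          linarith
        · have := hq hy
          have h2 := hps.dotProduct_mulVec_nonneg x
          simp only [star_trivial] at this h2 ⊢
          linarith
      exact_mod_cast Complex.zero_lt_real.2 hpos


lemma conjM_mul (A B : Matrix (Fin k) (Fin k) ℂ) : conjM (A * B) = conjM A * conjM B :=
  Matrix.map_mul

lemma conjM_conjM {a b : ℕ} (A : Matrix (Fin a) (Fin b) ℂ) : conjM (conjM A) = A := by
  ext i j; simp [conjM, Matrix.map_apply]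

lemma conjM_eq_conjTranspose {W : Matrix (Fin k) (Fin k) ℂ} (hW : W.IsSymm) :
    conjM W = Wᴴ := by
  ext i j
  simp [conjM, Matrix.map_apply, Matrix.conjTranspose_apply]
  rw [← Matrix.IsSymm.apply hW i j]

lemma conjTranspose_conjM {a b : ℕ} (W : Matrix (Fin a) (Fin b) ℂ) : (conjM W)ᴴ = Wᵀ := by
  ext i j; simp [conjM, Matrix.conjTranspose_apply, Matrix.map_apply]

lemma isUnit_conjM {A : Matrix (Fin k) (Fin k) ℂ} (hA : IsUnit A) : IsUnit (conjM A) := by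
  have := hA.map (RingHom.mapMatrix (starRingEnd ℂ) :
    Matrix (Fin k) (Fin k) ℂ →+* Matrix (Fin k) (Fin k) ℂ)
  simpa [conjM, RingHom.mapMatrix_apply] using this

lemma conjM_inv {A : Matrix (Fin k) (Fin k) ℂ} (hA : IsUnit A) :
    conjM (A⁻¹) = (conjM A)⁻¹ := by
  have hdet : IsUnit A.det := (Matrix.isUnit_iff_isUnit_det _).1 hA
  refine (Matrix.inv_eq_right_inv ?_).symm
  rw [← conjM_mul, Matrix.mul_nonsing_inv _ hdet]
  ext i j; simp [conjM, Matrix.map_apply, Matrix.one_apply]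

lemma conjM_mulVec_star (M : Matrix (Fin k) (Fin k) ℂ) (v : Fin k → ℂ) :
    conjM M *ᵥ star v = star (M *ᵥ v) := by
  rw [Matrix.star_mulVec, ← Matrix.vecMul_transpose]
  congr 1
section Units
variable {k : ℕ}

lemma star_ne_zero' {v : Fin k → ℂ} (hv : v ≠ 0) : star v ≠ 0 := by
  intro h
  apply hv
  have := congrArg star h
  simpa using this

lemma isUnit_one_sub_of_siegelD {W : Mat k k ℂ} (hW : W ∈ SiegelD k) : IsUnit (1 - W) := by
  obtain ⟨hsymm, hpos⟩ := hW
  apply isUnit_of_ker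
  intro v hv
  by_contra hv0
  have hWv : W *ᵥ v = v := by
    have h1 : (1 - W) *ᵥ v = v - W *ᵥ v := by rw [Matrix.sub_mulVec, Matrix.one_mulVec]
    rw [h1] at hv
    exact (sub_eq_zero.1 hv).symm
  set u := star v with hu
  have hu0 : u ≠ 0 := star_ne_zero' hv0
  have hcu : conjM W *ᵥ u = u := by rw [hu, conjM_mulVec_star, hWv]
  have hWu : star u ⬝ᵥ (W *ᵥ u) = star u ⬝ᵥ u := by
    have hA : (conjM W)ᴴ = W := by rw [conjTranspose_conjM]; exact hsymm
    calc star u ⬝ᵥ (W *ᵥ u) = star u ⬝ᵥ ((conjM W)ᴴ *ᵥ u) := by rw [hA]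
    _ = star (conjM W *ᵥ u) ⬝ᵥ u := dot_conjT _ _ _
    _ = star u ⬝ᵥ u := by rw [hcu]
  have hq : star u ⬝ᵥ ((1 - W * conjM W) *ᵥ u) = 0 := by
    rw [Matrix.sub_mulVec, Matrix.one_mulVec, ← Matrix.mulVec_mulVec, hcu,
      dotProduct_sub, hWu, sub_self]
  exact (hpos.dotProduct_mulVec_pos hu0).ne' hq

lemma im_decomp (Ω : Mat k k ℂ) :
    Ω - conjM Ω = (2 * Complex.I) • ((Ω.map Complex.im).map Complex.ofReal) := by
  ext i j
  simp only [Matrix.sub_apply, Matrix.smul_apply, Matrix.map_apply, conjM, smul_eq_mul]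
  rw [Complex.sub_conj]
  push_cast
  ring

lemma two_I_ne : (2 * Complex.I) ≠ 0 := by simp [Complex.I_ne_zero]

lemma isUnit_add_smul_of_siegelH {Ω : Mat k k ℂ} (hΩ : Ω ∈ SiegelH k) :
    IsUnit (Ω + Complex.I • 1) := by
  obtain ⟨hsymm, hpos⟩ := hΩ
  have hP : ((Ω.map Complex.im).map Complex.ofReal).PosDef := posDef_map_ofReal.2 hpos
  apply isUnit_of_ker
  intro v hv
  by_contra hv0
  set q := star v ⬝ᵥ (Ω *ᵥ v) with hqdef
  set t := star v ⬝ᵥ v with htdef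
  have ht0 : 0 ≤ t := dotProduct_star_self_nonneg v
  have h0 : q + Complex.I * t = 0 := by
    have h1 : (Ω + Complex.I • 1) *ᵥ v = Ω *ᵥ v + Complex.I • v := by
      rw [Matrix.add_mulVec, Matrix.smul_mulVec, Matrix.one_mulVec]
    have h2 : star v ⬝ᵥ ((Ω + Complex.I • 1) *ᵥ v) = 0 := by rw [hv]; simp
    rw [h1, dotProduct_add, dotProduct_smul] at h2
    simpa [hqdef, htdef, smul_eq_mul] using h2
  set P := ((Ω.map Complex.im).map Complex.ofReal) with hPdef
  have hqim : 0 < star v ⬝ᵥ (P *ᵥ v) := hP.dotProduct_mulVec_pos hv0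
  have hconj : star v ⬝ᵥ (conjM Ω *ᵥ v) = star q := by
    rw [conjM_eq_conjTranspose hsymm, dot_conjT]
    rw [hqdef, Matrix.star_dotProduct]
  have hsub : q - star q = (2 * Complex.I) * (star v ⬝ᵥ (P *ᵥ v)) := by
    have h2 := congrArg (fun M => star v ⬝ᵥ (M *ᵥ v)) (im_decomp Ω)
    simp only [Matrix.sub_mulVec, dotProduct_sub, Matrix.smul_mulVec,
      dotProduct_smul, smul_eq_mul] at h2
    rw [← hPdef] at h2
    rw [← h2, hconj]
  have htreal : star t = t := by
    have him : t.im = 0 := by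
      have h := (Complex.le_def.1 ht0).2
      simpa using h.symm
    exact Complex.conj_eq_iff_im.2 him
  have hq1 : q = -(Complex.I * t) := eq_neg_of_add_eq_zero_left h0
  have hstarq : star q = Complex.I * t := by
    rw [hq1]
    simp [htreal]
  have hcanc : (2 * Complex.I) * (star v ⬝ᵥ (P *ᵥ v)) = (2 * Complex.I) * (-t) := by
    rw [← hsub, hstarq, hq1]; ring
  have hqt : star v ⬝ᵥ (P *ᵥ v) = -t := mul_left_cancel₀ two_I_ne hcanc
  rw [hqt] at hqim
  have hneg : t < 0 := neg_pos.1 hqim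
  exact absurd (lt_of_le_of_lt ht0 hneg) (lt_irrefl 0)
end Units
section Alg
variable {k : ℕ}

lemma conjM_one : conjM (1 : Mat k k ℂ) = 1 := by
  ext i j; simp [conjM, Matrix.map_apply, Matrix.one_apply]

lemma conjM_add (A B : Mat k k ℂ) : conjM (A + B) = conjM A + conjM B := by
  ext i j; simp [conjM, Matrix.map_apply]

lemma conjM_sub (A B : Mat k k ℂ) : conjM (A - B) = conjM A - conjM B := by
  ext i j; simp [conjM, Matrix.map_apply]

lemma conjM_smul (c : ℂ) (A : Mat k k ℂ) : conjM (c • A) = (starRingEnd ℂ c) • conjM A := by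
  ext i j; simp [conjM, Matrix.map_apply]

lemma conjM_of_hermitian {X : Mat k k ℂ} (h : X.IsHermitian) : conjM X = Xᵀ := by
  ext i j
  have := congrFun (congrFun h.eq j) i
  simp only [Matrix.conjTranspose_apply] at this
  simp [conjM, Matrix.map_apply, Matrix.transpose_apply, ← this]

lemma isUnit_inv' {A : Mat k k ℂ} (hA : IsUnit A) : IsUnit A⁻¹ := by
  have hdet := (Matrix.isUnit_iff_isUnit_det _).1 hA
  exact ⟨⟨A⁻¹, A, Matrix.nonsing_inv_mul _ hdet, Matrix.mul_nonsing_inv _ hdet⟩, rfl⟩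

lemma commute_inv_right {A B : Mat k k ℂ} (hA : IsUnit A) (h : A * B = B * A) :
    A⁻¹ * B = B * A⁻¹ := by
  have hAd := (Matrix.isUnit_iff_isUnit_det _).1 hA
  calc A⁻¹ * B = A⁻¹ * (B * (A * A⁻¹)) := by rw [Matrix.mul_nonsing_inv _ hAd, Matrix.mul_one]
  _ = A⁻¹ * (B * A * A⁻¹) := by rw [Matrix.mul_assoc B]
  _ = A⁻¹ * (A * B * A⁻¹) := by rw [← h]
  _ = A⁻¹ * (A * (B * A⁻¹)) := by rw [Matrix.mul_assoc A]
  _ = B * A⁻¹ := Matrix.nonsing_inv_mul_cancel_left _ _ hAd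

lemma scalar_fold : ((2 * Complex.I)⁻¹ * Complex.I * 2 : ℂ) = 1 := by
  have h1 : (2 * Complex.I : ℂ) ≠ 0 := two_I_ne
  field_simp

lemma cayley_mem_siegelH {W : Mat k k ℂ} (hW : W ∈ SiegelD k) :
    (Complex.I • ((1 + W) * (1 - W)⁻¹)) ∈ SiegelH k := by
  obtain ⟨hsymm, hpos⟩ := hW
  have hT : IsUnit (1 - W) := isUnit_one_sub_of_siegelD ⟨hsymm, hpos⟩
  have hTd := (Matrix.isUnit_iff_isUnit_det _).1 hT
  set T : Mat k k ℂ := 1 - W with hTdef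
  set Wb : Mat k k ℂ := conjM W with hWbdef
  set Tb : Mat k k ℂ := 1 - Wb with hTbdef
  have hTbc : Tb = conjM T := by rw [hTdef, hTbdef, conjM_sub, conjM_one]
  have hTb : IsUnit Tb := by rw [hTbc]; exact isUnit_conjM hT
  have hTbd := (Matrix.isUnit_iff_isUnit_det _).1 hTb
  have hTsymm : Tᵀ = T := by rw [hTdef, Matrix.transpose_sub, Matrix.transpose_one, hsymm.eq]
  have hcomm : T * (1 + W) = (1 + W) * T := by rw [hTdef]; noncomm_ring
  set Ω : Mat k k ℂ := Complex.I • ((1 + W) * T⁻¹) with hΩdef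
  constructor
  · -- symmetry
    show Ωᵀ = Ω
    rw [hΩdef, Matrix.transpose_smul, Matrix.transpose_mul, Matrix.transpose_nonsing_inv,
      hTsymm, Matrix.transpose_add, Matrix.transpose_one, hsymm.eq,
      commute_inv_right hT hcomm]
  · -- posdef of imaginary part
    have hconjΩ : conjM Ω = (-Complex.I) • ((1 + Wb) * Tb⁻¹) := by
      rw [hΩdef, conjM_smul, conjM_mul, conjM_add, conjM_one, conjM_inv hT, ← hTbc]
      simp
      rfl
    have hkey : (1 + W) * T⁻¹ + (1 + Wb) * Tb⁻¹
        = Tb⁻¹ * ((1 - Wb * W) + (1 - Wb * W)) * T⁻¹ := by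
      have h1 : (1 + W) * T⁻¹ = Tb⁻¹ * (Tb * (1 + W)) * T⁻¹ := by
        rw [Matrix.nonsing_inv_mul_cancel_left _ _ hTbd]
      have hc2 : Tb * (1 + Wb) = (1 + Wb) * Tb := by rw [hTbdef]; noncomm_ring
      have h2 : (1 + Wb) * Tb⁻¹ = Tb⁻¹ * ((1 + Wb) * T) * T⁻¹ := by
        calc (1 + Wb) * Tb⁻¹ = Tb⁻¹ * (1 + Wb) := (commute_inv_right hTb hc2).symm
        _ = Tb⁻¹ * ((1 + Wb) * (T * T⁻¹)) := by
            rw [Matrix.mul_nonsing_inv _ hTd, Matrix.mul_one]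
        _ = Tb⁻¹ * ((1 + Wb) * T) * T⁻¹ := by simp only [Matrix.mul_assoc]
      rw [h1, h2, ← Matrix.add_mul, ← Matrix.mul_add]
      congr 2
      rw [hTbdef, hTdef]
      noncomm_ring
    have hP : ((Ω.map Complex.im).map Complex.ofReal)
        = Tb⁻¹ * (1 - Wb * W) * T⁻¹ := by
      have h3 : ((Ω.map Complex.im).map Complex.ofReal)
          = (2 * Complex.I)⁻¹ • (Ω - conjM Ω) := by
        rw [im_decomp Ω, smul_smul, inv_mul_cancel₀ two_I_ne, one_smul]
      rw [h3, hconjΩ, hΩdef, sub_eq_add_neg, ← neg_smul, neg_neg, ← smul_add, hkey]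
      rw [show ((1:Mat k k ℂ) - Wb * W) + (1 - Wb * W) = (2:ℂ) • (1 - Wb * W) by
        rw [two_smul]]
      rw [Matrix.mul_smul, Matrix.smul_mul, smul_smul, smul_smul, scalar_fold, one_smul]
    have hWbt : Wbᵀ = Wb := by
      ext i j
      have hw := congrFun (congrFun hsymm i) j
      simp only [Matrix.transpose_apply] at hw
      simp [hWbdef, conjM, Matrix.transpose_apply, Matrix.map_apply, hw]
    have hQ : (1 - Wb * W).PosDef := by
      have h4 : (1 : Mat k k ℂ) - Wb * W = (1 - W * Wb)ᵀ := by
        rw [Matrix.transpose_sub, Matrix.transpose_one, Matrix.transpose_mul, hWbt, hsymm.eq]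
      exact h4 ▸ hpos.transpose
    refine posDef_map_ofReal.1 ?_
    rw [hP]
    have hB : IsUnit (Tb⁻¹) := isUnit_inv' hTb
    have hBH : (Tb⁻¹)ᴴ = T⁻¹ := by
      rw [Matrix.conjTranspose_nonsing_inv]
      congr 1
      rw [hTbc, conjTranspose_conjM, hTsymm]
    have hfin := posDef_conj hQ hB
    rwa [hBH] at hfin
end Alg
section Psi
variable {k : ℕ}

lemma expand_prod (A B : Mat k k ℂ) (c d : ℂ) :
    (A + c • 1) * (B + d • 1) = A * B + d • A + c • B + (c * d) • 1 := by
  simp only [Matrix.add_mul, Matrix.mul_add, Matrix.smul_mul, Matrix.mul_smul, one_mul,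
    mul_one, smul_smul, smul_add]
  module

lemma omega_poly_comm (Ω : Mat k k ℂ) (c d : ℂ) :
    (Ω + c • 1) * (Ω + d • 1) = (Ω + d • 1) * (Ω + c • 1) := by
  rw [expand_prod, expand_prod, mul_comm d c]
  abel

lemma neg_two_I_sq : (-(2 * Complex.I)) * (2 * Complex.I) = (4 : ℂ) := by
  have := Complex.I_sq
  ring_nf
  rw [Complex.I_sq]
  ring

lemma posDef_four_smul {P : Mat k k ℂ} (hP : P.PosDef) : ((4 : ℂ) • P).PosDef := by
  rw [Matrix.posDef_iff_dotProduct_mulVec]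
  constructor
  · rw [Matrix.IsHermitian, Matrix.conjTranspose_smul, hP.1.eq]
    norm_num
  · intro v hv
    have h1 : ((4 : ℂ) • P) *ᵥ v = (4 : ℂ) • (P *ᵥ v) := Matrix.smul_mulVec _ _ _
    rw [h1, dotProduct_smul, smul_eq_mul]
    have h4 : (0 : ℂ) < 4 := by
      rw [show (4 : ℂ) = ((4 : ℝ) : ℂ) by norm_num]
      exact Complex.zero_lt_real.2 (by norm_num)
    exact mul_pos h4 (hP.dotProduct_mulVec_pos hv)

lemma psi_mem_siegelD {Ω : Mat k k ℂ} (hΩ : Ω ∈ SiegelH k) :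
    ((Ω + Complex.I • 1)⁻¹ * (Ω - Complex.I • 1)) ∈ SiegelD k := by
  obtain ⟨hsymm, hpos⟩ := hΩ
  have hS : IsUnit (Ω + Complex.I • 1) := isUnit_add_smul_of_siegelH ⟨hsymm, hpos⟩
  have hSd := (Matrix.isUnit_iff_isUnit_det _).1 hS
  set S : Mat k k ℂ := Ω + Complex.I • 1 with hSdef
  set D : Mat k k ℂ := Ω - Complex.I • 1 with hDdef
  have hDD : D = Ω + (-Complex.I) • 1 := by rw [hDdef, neg_smul, ← sub_eq_add_neg]
  have hcomm : S * D = D * S := by rw [hSdef, hDD]; exact omega_poly_comm Ω _ _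
  set Ωb : Mat k k ℂ := conjM Ω with hΩbdef
  have hconjS : conjM S = Ωb - Complex.I • 1 := by
    rw [hSdef, conjM_add, conjM_smul, conjM_one, ← hΩbdef]
    simp [sub_eq_add_neg]
  have hconjD : conjM D = Ωb + Complex.I • 1 := by
    rw [hDdef, conjM_sub, conjM_smul, conjM_one, ← hΩbdef]
    simp [sub_eq_add_neg]
  set Sb : Mat k k ℂ := Ωb - Complex.I • 1 with hSbdef
  set Db : Mat k k ℂ := Ωb + Complex.I • 1 with hDbdef
  have hSb : IsUnit Sb := by rw [← hconjS]; exact isUnit_conjM hS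
  have hSbd := (Matrix.isUnit_iff_isUnit_det _).1 hSb
  have hSbDD : Sb = Ωb + (-Complex.I) • 1 := by rw [hSbdef, neg_smul, ← sub_eq_add_neg]
  have hST : Sᵀ = S := by
    rw [hSdef, Matrix.transpose_add, Matrix.transpose_smul, Matrix.transpose_one, hsymm.eq]
  have hW : conjM (S⁻¹ * D) = Db * Sb⁻¹ := by
    rw [conjM_mul, conjM_inv hS, hconjS, hconjD]
    have hc : Sb * Db = Db * Sb := by rw [hSbDD, hDbdef]; exact omega_poly_comm Ωb _ _
    exact commute_inv_right hSb hc
  constructor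
  · -- symmetry
    show (S⁻¹ * D)ᵀ = S⁻¹ * D
    rw [Matrix.transpose_mul, Matrix.transpose_nonsing_inv, hST]
    rw [show Dᵀ = D by
      rw [hDdef, Matrix.transpose_sub, Matrix.transpose_smul, Matrix.transpose_one, hsymm.eq]]
    exact (commute_inv_right hS hcomm).symm
  · -- posdef
    rw [hW]
    set P : Mat k k ℂ := (Ω.map Complex.im).map Complex.ofReal with hPdef
    have hPpos : P.PosDef := posDef_map_ofReal.2 hpos
    have hX : S * Sb - D * Db = (4 : ℂ) • P := by
      have him : Ω - Ωb = (2 * Complex.I) • P := im_decomp Ω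
      rw [hSdef, hSbDD, hDD, hDbdef, expand_prod, expand_prod]
      have hgoal : Ω * Ωb + -Complex.I • Ω + Complex.I • Ωb + (Complex.I * -Complex.I) • 1
          - (Ω * Ωb + Complex.I • Ω + -Complex.I • Ωb + (-Complex.I * Complex.I) • 1)
          = (-(2 * Complex.I)) • (Ω - Ωb) := by module
      rw [hgoal, him, smul_smul, neg_two_I_sq]
    have hkey : 1 - (S⁻¹ * D) * (Db * Sb⁻¹) = S⁻¹ * ((4 : ℂ) • P) * Sb⁻¹ := by
      have h1 : (1 : Mat k k ℂ) = S⁻¹ * (S * Sb) * Sb⁻¹ := by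
        rw [Matrix.nonsing_inv_mul_cancel_left _ _ hSd, Matrix.mul_nonsing_inv _ hSbd]
      have h2 : (S⁻¹ * D) * (Db * Sb⁻¹) = S⁻¹ * (D * Db) * Sb⁻¹ := by
        simp only [Matrix.mul_assoc]
      calc (1 : Mat k k ℂ) - (S⁻¹ * D) * (Db * Sb⁻¹)
          = S⁻¹ * (S * Sb) * Sb⁻¹ - S⁻¹ * (D * Db) * Sb⁻¹ := by rw [← h1, ← h2]
        _ = S⁻¹ * (S * Sb - D * Db) * Sb⁻¹ := by
            rw [Matrix.mul_sub S⁻¹ (S * Sb) (D * Db), Matrix.sub_mul _ _ Sb⁻¹]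
        _ = S⁻¹ * ((4 : ℂ) • P) * Sb⁻¹ := by rw [hX]
    rw [hkey]
    have hSH : Sᴴ = Sb := by
      rw [← hconjS]
      ext i j
      have hij := congrFun (congrFun hST i) j
      simp only [Matrix.transpose_apply] at hij
      simp [conjM, Matrix.conjTranspose_apply, Matrix.map_apply, hij]
    have hfin := posDef_conj (posDef_four_smul hPpos) (isUnit_inv' hS)
    have hBH : (S⁻¹)ᴴ = Sb⁻¹ := by rw [Matrix.conjTranspose_nonsing_inv, hSH]
    rwa [hBH] at hfin
end Psi
section InvOn
variable {k m : ℕ}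

lemma scalar_fold2 : Complex.I * (2 * (2 * Complex.I)⁻¹) = 1 := by
  have h1 : (2 * Complex.I : ℂ) ≠ 0 := two_I_ne
  field_simp

lemma cayley_left_inv_fst {W : Mat k k ℂ} (hW : W ∈ SiegelD k) :
    (Complex.I • ((1 + W) * (1 - W)⁻¹) + Complex.I • 1)⁻¹
      * (Complex.I • ((1 + W) * (1 - W)⁻¹) - Complex.I • 1) = W := by
  have hT : IsUnit (1 - W) := isUnit_one_sub_of_siegelD hW
  have hTd := (Matrix.isUnit_iff_isUnit_det _).1 hT
  set T : Mat k k ℂ := 1 - W with hTdef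
  set Ω : Mat k k ℂ := Complex.I • ((1 + W) * T⁻¹) with hΩdef
  have hS : IsUnit (Ω + Complex.I • 1) :=
    isUnit_add_smul_of_siegelH (cayley_mem_siegelH hW)
  have hSd := (Matrix.isUnit_iff_isUnit_det _).1 hS
  have hSeq : Ω + Complex.I • 1 = (2 * Complex.I) • T⁻¹ := by
    have h1 : (Complex.I : ℂ) • (1 : Mat k k ℂ) = Complex.I • (T * T⁻¹) := by
      rw [Matrix.mul_nonsing_inv _ hTd]
    rw [hΩdef, h1, ← smul_add, ← Matrix.add_mul]
    have h2 : (1 + W) + T = (2 : ℂ) • 1 := by rw [hTdef]; module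
    rw [h2, Matrix.smul_mul, one_mul, smul_smul]
    congr 1
    ring
  have hcommTW : T * W = W * T := by rw [hTdef]; noncomm_ring
  have hSW : (Ω + Complex.I • 1) * W = Ω - Complex.I • 1 := by
    rw [hSeq, Matrix.smul_mul, commute_inv_right hT hcommTW]
    have h1 : (Complex.I : ℂ) • (1 : Mat k k ℂ) = Complex.I • (T * T⁻¹) := by
      rw [Matrix.mul_nonsing_inv _ hTd]
    rw [hΩdef, h1, ← smul_sub, ← Matrix.sub_mul]
    have h2 : (1 + W) - T = (2 : ℂ) • W := by rw [hTdef]; module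
    rw [h2, Matrix.smul_mul, smul_smul]
    congr 1
    ring
  rw [← hSW, Matrix.nonsing_inv_mul_cancel_left _ _ hSd]

lemma cayley_left_inv_snd {W : Mat k k ℂ} (η : Mat m k ℂ) (hW : W ∈ SiegelD k) :
    ((2 * Complex.I) • (η * (1 - W)⁻¹))
      * (Complex.I • ((1 + W) * (1 - W)⁻¹) + Complex.I • 1)⁻¹ = η := by
  have hT : IsUnit (1 - W) := isUnit_one_sub_of_siegelD hW
  have hTd := (Matrix.isUnit_iff_isUnit_det _).1 hT
  set T : Mat k k ℂ := 1 - W with hTdef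
  set Ω : Mat k k ℂ := Complex.I • ((1 + W) * T⁻¹) with hΩdef
  have hS : IsUnit (Ω + Complex.I • 1) :=
    isUnit_add_smul_of_siegelH (cayley_mem_siegelH hW)
  have hSd := (Matrix.isUnit_iff_isUnit_det _).1 hS
  have hSeq : Ω + Complex.I • 1 = (2 * Complex.I) • T⁻¹ := by
    have h1 : (Complex.I : ℂ) • (1 : Mat k k ℂ) = Complex.I • (T * T⁻¹) := by
      rw [Matrix.mul_nonsing_inv _ hTd]
    rw [hΩdef, h1, ← smul_add, ← Matrix.add_mul]
    have h2 : (1 + W) + T = (2 : ℂ) • 1 := by rw [hTdef]; module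
    rw [h2, Matrix.smul_mul, one_mul, smul_smul]
    congr 1
    ring
  have hZ : (2 * Complex.I) • (η * T⁻¹) = η * (Ω + Complex.I • 1) := by
    rw [hSeq, Matrix.mul_smul]
  rw [hZ, Matrix.mul_nonsing_inv_cancel_right _ _ hSd]

lemma cayley_right_inv_fst {Ω : Mat k k ℂ} (hΩ : Ω ∈ SiegelH k) :
    Complex.I • ((1 + (Ω + Complex.I • 1)⁻¹ * (Ω - Complex.I • 1))
      * (1 - (Ω + Complex.I • 1)⁻¹ * (Ω - Complex.I • 1))⁻¹) = Ω := by
  have hS : IsUnit (Ω + Complex.I • 1) := isUnit_add_smul_of_siegelH hΩ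
  have hSd := (Matrix.isUnit_iff_isUnit_det _).1 hS
  set S : Mat k k ℂ := Ω + Complex.I • 1 with hSdef
  set D : Mat k k ℂ := Ω - Complex.I • 1 with hDdef
  have hTW : 1 - S⁻¹ * D = (2 * Complex.I) • S⁻¹ := by
    have h1 : (1 : Mat k k ℂ) = S⁻¹ * S := (Matrix.nonsing_inv_mul _ hSd).symm
    rw [h1, ← Matrix.mul_sub]
    have h2 : S - D = (2 * Complex.I) • 1 := by rw [hSdef, hDdef]; module
    rw [h2, Matrix.mul_smul, mul_one]
  have hIs : (1 - S⁻¹ * D)⁻¹ = (2 * Complex.I)⁻¹ • S := by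
    apply Matrix.inv_eq_right_inv
    rw [hTW, Matrix.smul_mul, Matrix.mul_smul, smul_smul, Matrix.nonsing_inv_mul _ hSd,
      mul_inv_cancel₀ two_I_ne, one_smul]
  have h1W : 1 + S⁻¹ * D = S⁻¹ * ((2 : ℂ) • Ω) := by
    have h1 : (1 : Mat k k ℂ) = S⁻¹ * S := (Matrix.nonsing_inv_mul _ hSd).symm
    rw [h1, ← Matrix.mul_add]
    congr 1
    rw [hSdef, hDdef]; module
  rw [hIs, h1W]
  have hScomm : S * Ω = Ω * S := by
    rw [hSdef, Matrix.add_mul, Matrix.mul_add, Matrix.smul_mul, Matrix.mul_smul, one_mul,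
      mul_one]
  calc Complex.I • (S⁻¹ * ((2 : ℂ) • Ω) * ((2 * Complex.I)⁻¹ • S))
      = (Complex.I * ((2 : ℂ) * (2 * Complex.I)⁻¹)) • (S⁻¹ * (Ω * S)) := by
        simp only [Matrix.mul_smul, Matrix.smul_mul, smul_smul, Matrix.mul_assoc]
        congr 1
        ring
  _ = S⁻¹ * (S * Ω) := by rw [scalar_fold2, one_smul, hScomm]
  _ = Ω := Matrix.nonsing_inv_mul_cancel_left _ _ hSd

lemma cayley_right_inv_snd {Ω : Mat k k ℂ} (Z : Mat m k ℂ) (hΩ : Ω ∈ SiegelH k) :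
    (2 * Complex.I) • ((Z * (Ω + Complex.I • 1)⁻¹)
      * (1 - (Ω + Complex.I • 1)⁻¹ * (Ω - Complex.I • 1))⁻¹) = Z := by
  have hS : IsUnit (Ω + Complex.I • 1) := isUnit_add_smul_of_siegelH hΩ
  have hSd := (Matrix.isUnit_iff_isUnit_det _).1 hS
  set S : Mat k k ℂ := Ω + Complex.I • 1 with hSdef
  set D : Mat k k ℂ := Ω - Complex.I • 1 with hDdef
  have hTW : 1 - S⁻¹ * D = (2 * Complex.I) • S⁻¹ := by
    have h1 : (1 : Mat k k ℂ) = S⁻¹ * S := (Matrix.nonsing_inv_mul _ hSd).symm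
    rw [h1, ← Matrix.mul_sub]
    have h2 : S - D = (2 * Complex.I) • 1 := by rw [hSdef, hDdef]; module
    rw [h2, Matrix.mul_smul, mul_one]
  have hIs : (1 - S⁻¹ * D)⁻¹ = (2 * Complex.I)⁻¹ • S := by
    apply Matrix.inv_eq_right_inv
    rw [hTW, Matrix.smul_mul, Matrix.mul_smul, smul_smul, Matrix.nonsing_inv_mul _ hSd,
      mul_inv_cancel₀ two_I_ne, one_smul]
  rw [hIs, Matrix.mul_smul, smul_smul, mul_inv_cancel₀ two_I_ne, one_smul,
    Matrix.nonsing_inv_mul_cancel_right _ _ hSd]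
end InvOn
section Diff
variable {E : Type*} [NormedAddCommGroup E] [NormedSpace ℂ E] {s : Set E}

lemma mdiff_of_entries {a b : ℕ} {f : E → Mat a b ℂ}
    (h : ∀ i j, DifferentiableOn ℂ (fun x => f x i j) s) : DifferentiableOn ℂ f s := by
  apply differentiableOn_pi.2
  intro i
  exact differentiableOn_pi.2 (h i)

lemma mdiff_entry {a b : ℕ} {f : E → Mat a b ℂ} (h : DifferentiableOn ℂ f s) (i : Fin a)
    (j : Fin b) : DifferentiableOn ℂ (fun x => f x i j) s :=
  differentiableOn_pi.1 (differentiableOn_pi.1 h i) j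

lemma mdiff_mul {a b c : ℕ} {f : E → Mat a b ℂ} {g : E → Mat b c ℂ}
    (hf : DifferentiableOn ℂ f s) (hg : DifferentiableOn ℂ g s) :
    DifferentiableOn ℂ (fun x => f x * g x) s := by
  apply mdiff_of_entries
  intro i j
  have heq : (fun x => (f x * g x) i j) = fun x => ∑ l, f x i l * g x l j := by
    ext x; simp [Matrix.mul_apply]
  rw [heq]
  exact DifferentiableOn.fun_sum fun l _ => (mdiff_entry hf i l).mul (mdiff_entry hg l j)

lemma mdiff_det {a : ℕ} {f : E → Mat a a ℂ} (hf : DifferentiableOn ℂ f s) :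
    DifferentiableOn ℂ (fun x => (f x).det) s := by
  have heq : (fun x => (f x).det)
      = fun x => ∑ σ : Equiv.Perm (Fin a),
          ((Equiv.Perm.sign σ : ℤ) : ℂ) * ∏ i, f x (σ i) i := by
    ext x; rw [Matrix.det_apply']
  rw [heq]
  refine DifferentiableOn.fun_sum fun σ _ => DifferentiableOn.const_mul ?_ _
  intro x hx
  exact (HasFDerivWithinAt.finset_prod
    (fun i _ => ((mdiff_entry hf (σ i) i) x hx).hasFDerivWithinAt)).differentiableWithinAt

lemma mdiff_adjugate {a : ℕ} {f : E → Mat a a ℂ} (hf : DifferentiableOn ℂ f s) :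
    DifferentiableOn ℂ (fun x => (f x).adjugate) s := by
  apply mdiff_of_entries
  intro i j
  have heq : (fun x => (f x).adjugate i j)
      = fun x => ((f x).updateRow j (Pi.single i 1)).det := by
    ext x; rw [Matrix.adjugate_apply]
  rw [heq]
  apply mdiff_det
  apply mdiff_of_entries
  intro i' j'
  by_cases h : i' = j
  · subst h
    simp only [Matrix.updateRow_self]
    exact differentiableOn_const _
  · simp only [Matrix.updateRow_ne h]
    exact mdiff_entry hf i' j'

lemma mdiff_inv {a : ℕ} {f : E → Mat a a ℂ} (hf : DifferentiableOn ℂ f s)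
    (hdet : ∀ x ∈ s, IsUnit (f x).det) :
    DifferentiableOn ℂ (fun x => (f x)⁻¹) s := by
  have heq : (fun x => (f x)⁻¹) = fun x => ((f x).det)⁻¹ • (f x).adjugate := by
    ext x : 1
    rw [Matrix.inv_def, Ring.inverse_eq_inv']
  rw [heq]
  exact DifferentiableOn.smul
    ((mdiff_det hf).inv fun x hx => (hdet x hx).ne_zero) (mdiff_adjugate hf)
end Diff
end CayleyHelpers

theorem partial_cayley_transform_biholomorphic (n m : ℕ) :
    (∀ p ∈ DJ n m, IsUnit ((1 : Mat n n ℂ) - p.1) ∧ cayley p ∈ HJ n m)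
    ∧ DifferentiableOn ℂ (cayley (n := n) (m := m)) (DJ n m)
    ∧ Set.BijOn (cayley (n := n) (m := m)) (DJ n m) (HJ n m)
    ∧ ∃ Ψ : Mat n n ℂ × Mat m n ℂ → Mat n n ℂ × Mat m n ℂ,
        DifferentiableOn ℂ Ψ (HJ n m) ∧
        Set.InvOn Ψ (cayley (n := n) (m := m)) (DJ n m) (HJ n m) := by
  set Ψ : Mat n n ℂ × Mat m n ℂ → Mat n n ℂ × Mat m n ℂ :=
    fun q => ((q.1 + Complex.I • 1)⁻¹ * (q.1 - Complex.I • 1),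
      q.2 * (q.1 + Complex.I • 1)⁻¹) with hΨdef
  have hdetDJ : ∀ p : Mat n n ℂ × Mat m n ℂ, p ∈ DJ n m → IsUnit ((1 : Mat n n ℂ) - p.1).det :=
    fun p hp => (Matrix.isUnit_iff_isUnit_det _).1 (isUnit_one_sub_of_siegelD hp)
  have hdetHJ : ∀ p : Mat n n ℂ × Mat m n ℂ, p ∈ HJ n m →
      IsUnit (p.1 + Complex.I • (1 : Mat n n ℂ)).det :=
    fun p hp => (Matrix.isUnit_iff_isUnit_det _).1 (isUnit_add_smul_of_siegelH hp)
  have hfst : DifferentiableOn ℂ (fun p : Mat n n ℂ × Mat m n ℂ => p.1) Set.univ :=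
    differentiable_fst.differentiableOn
  have hsnd : DifferentiableOn ℂ (fun p : Mat n n ℂ × Mat m n ℂ => p.2) Set.univ :=
    differentiable_snd.differentiableOn
  have hInv : Set.InvOn Ψ (cayley (n := n) (m := m)) (DJ n m) (HJ n m) := by
    constructor
    · intro p hp
      have h1 := cayley_left_inv_fst (W := p.1) hp
      have h2 := cayley_left_inv_snd (W := p.1) p.2 hp
      exact Prod.ext h1 h2
    · intro q hq
      have h1 := cayley_right_inv_fst (Ω := q.1) hq
      have h2 := cayley_right_inv_snd (Ω := q.1) q.2 hq
      exact Prod.ext h1 h2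
  have hMapsTo : Set.MapsTo (cayley (n := n) (m := m)) (DJ n m) (HJ n m) :=
    fun p hp => cayley_mem_siegelH hp
  have hMapsTo' : Set.MapsTo Ψ (HJ n m) (DJ n m) :=
    fun q hq => psi_mem_siegelD hq
  refine ⟨fun p hp => ⟨isUnit_one_sub_of_siegelD hp, cayley_mem_siegelH hp⟩, ?_, ?_, Ψ, ?_, hInv⟩
  · -- differentiability of cayley
    have h1 : DifferentiableOn ℂ (fun p : Mat n n ℂ × Mat m n ℂ => (1 - p.1)⁻¹) (DJ n m) :=
      mdiff_inv ((hfst.mono (Set.subset_univ _)).const_sub 1) hdetDJ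
    apply DifferentiableOn.prodMk
    · exact DifferentiableOn.const_smul
        (mdiff_mul ((hfst.mono (Set.subset_univ _)).const_add 1) h1) Complex.I
    · exact DifferentiableOn.const_smul
        (mdiff_mul (hsnd.mono (Set.subset_univ _)) h1) (2 * Complex.I)
  · exact Set.InvOn.bijOn hInv hMapsTo hMapsTo'
  · -- differentiability of Ψ
    have h1 : DifferentiableOn ℂ
        (fun q : Mat n n ℂ × Mat m n ℂ => (q.1 + Complex.I • 1)⁻¹) (HJ n m) :=
      mdiff_inv ((hfst.mono (Set.subset_univ _)).add_const (Complex.I • 1)) hdetHJ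
    apply DifferentiableOn.prodMk
    · exact mdiff_mul h1 ((hfst.mono (Set.subset_univ _)).sub_const (Complex.I • 1))
    · exact mdiff_mul (hsnd.mono (Set.subset_univ _)) h1
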